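/- Let L = 2, A ∈ ℝ^{M×N}, y ∈ ℝ^M. Suppose x : [0,∞) → ℝ^N is differentiable, satisfies the reduced gradient flow x'(t) = −[Aᵀ(A x(t)^{⊙2} − y)] ⊙ x(t) for all t ≥ 0, has x(0) entrywise strictly positive, and the limit x̃∞ := lim_{t→∞} x(t)^{⊙2} exists and lies in S₊. Then x̃∞ minimizes over z ∈ S₊ the function g(z) := ⟨z, log(z) − 𝟙 − log(x(0)^{⊙2})⟩ = Σₙ zₙ(log zₙ − 1 − log((x(0))ₙ²)), with the convention 0·log 0 = 0. -/

import Mathlib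

open Filter Topology Matrix

noncomputable section

/-- The NNLS solution set `S₊ = argmin_{z ≥ 0} ‖Az − y‖₂²`. -/
def nnlsSet {M N : ℕ} (A : Matrix (Fin M) (Fin N) ℝ) (y : Fin M → ℝ) :
    Set (Fin N → ℝ) :=
  {z | (∀ i, 0 ≤ z i) ∧ ∀ w : Fin N → ℝ, (∀ i, 0 ≤ w i) →
    ∑ j, (A.mulVec z j - y j) ^ 2 ≤ ∑ j, (A.mulVec w j - y j) ^ 2}

/-- The reduced gradient flow `x'(t) = −[Aᵀ(A x(t)^{⊙L} − y)] ⊙ x(t)^{⊙(L−1)}` for `t ≥ 0`. -/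
def GradFlow {M N : ℕ} (A : Matrix (Fin M) (Fin N) ℝ) (y : Fin M → ℝ) (L : ℕ)
    (x : ℝ → Fin N → ℝ) : Prop :=
  ∀ t : ℝ, 0 ≤ t → ∀ i : Fin N,
    HasDerivAt (fun s => x s i)
      (-(Matrix.mulVec Aᵀ (A.mulVec (fun j => x t j ^ L) - y) i * x t i ^ (L - 1))) t

/-- All NNLS solutions have the same image under `A`. -/
lemma nnls_mulVec_eq {M N : ℕ} (A : Matrix (Fin M) (Fin N) ℝ) (y : Fin M → ℝ)
    {z w : Fin N → ℝ} (hz : z ∈ nnlsSet A y) (hw : w ∈ nnlsSet A y) :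
    A.mulVec z = A.mulVec w := by
  classical
  have h2 : ∑ j, (A.mulVec w j - y j) ^ 2 ≤ ∑ j, (A.mulVec z j - y j) ^ 2 := hw.2 z hz.1
  set u : Fin N → ℝ := fun i => (z i + w i) / 2 with hu
  have hu0 : ∀ i, 0 ≤ u i := fun i => by
    have := hz.1 i; have := hw.1 i; simp only [hu]; positivity
  have hAu : ∀ j, A.mulVec u j = (A.mulVec z j + A.mulVec w j) / 2 := by
    intro j
    simp only [hu, Matrix.mulVec, dotProduct]
    rw [← Finset.sum_add_distrib, Finset.sum_div]
    exact Finset.sum_congr rfl fun k _ => by ring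
  have h3 := hz.2 u hu0
  have key : ∑ j, (A.mulVec z j - A.mulVec w j) ^ 2 ≤ 0 := by
    have hid : ∀ j, (A.mulVec z j - A.mulVec w j) ^ 2
        = 2 * (A.mulVec z j - y j) ^ 2 + 2 * (A.mulVec w j - y j) ^ 2
          - 4 * (A.mulVec u j - y j) ^ 2 := by
      intro j; rw [hAu j]; ring
    have heq : ∑ j, (A.mulVec z j - A.mulVec w j) ^ 2
        = 2 * ∑ j, (A.mulVec z j - y j) ^ 2 + 2 * ∑ j, (A.mulVec w j - y j) ^ 2
          - 4 * ∑ j, (A.mulVec u j - y j) ^ 2 := by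
      rw [Finset.mul_sum, Finset.mul_sum, Finset.mul_sum, ← Finset.sum_add_distrib,
        ← Finset.sum_sub_distrib]
      exact Finset.sum_congr rfl fun j _ => hid j
    rw [heq]; linarith
  have hzero := (Finset.sum_eq_zero_iff_of_nonneg (fun j _ => sq_nonneg _)).mp
    (le_antisymm key (Finset.sum_nonneg fun j _ => sq_nonneg _))
  funext j
  have h4 := pow_eq_zero_iff (n := 2) (by norm_num) |>.mp (hzero j (Finset.mem_univ j))
  linarith

theorem stmt7 {M N : ℕ}
    (A : Matrix (Fin M) (Fin N) ℝ) (y : Fin M → ℝ)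
    (x : ℝ → Fin N → ℝ) (hx0 : ∀ i, 0 < x 0 i)
    (hflow : GradFlow A y 2 x)
    (xinf : Fin N → ℝ)
    (hlim : Tendsto (fun t => fun i => x t i ^ 2) atTop (𝓝 xinf))
    (hmem : xinf ∈ nnlsSet A y) :
    ∀ z ∈ nnlsSet A y,
      ∑ n, xinf n * (Real.log (xinf n) - 1 - Real.log ((x 0 n) ^ 2)) ≤
      ∑ n, z n * (Real.log (z n) - 1 - Real.log ((x 0 n) ^ 2)) := by
  classical
  intro z hzmem
  -- continuity of x on [0,∞)
  have hxcont : ∀ i, ContinuousOn (fun t => x t i) (Set.Ici 0) := fun i t ht =>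
    (hflow t ht i).continuousAt.continuousWithinAt
  set xc : ℝ → Fin N → ℝ := fun t i => x (max t 0) i with hxc
  have hxccont : ∀ i, Continuous (fun t => xc t i) := fun i =>
    (hxcont i).comp_continuous (continuous_id.max continuous_const)
      (fun t => le_max_right t 0)
  set g : ℝ → Fin N → ℝ :=
    fun t i => Matrix.mulVec Aᵀ (A.mulVec (fun j => xc t j ^ 2) - y) i with hg
  have hgcont : ∀ i, Continuous fun t => g t i := by
    intro i
    simp only [hg, Matrix.mulVec, dotProduct, Pi.sub_apply]
    exact continuous_finset_sum _ fun j _ =>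
      continuous_const.mul
        (((continuous_finset_sum _ fun k _ =>
          continuous_const.mul ((hxccont k).pow 2))).sub continuous_const)
  have hgx : ∀ t, 0 ≤ t → ∀ i,
      g t i = Matrix.mulVec Aᵀ (A.mulVec (fun j => x t j ^ 2) - y) i := by
    intro t ht i
    simp only [hg, hxc, max_eq_left ht]
  have hx' : ∀ t, 0 ≤ t → ∀ i,
      HasDerivAt (fun s => x s i) (-(g t i * x t i)) t := by
    intro t ht i
    have := hflow t ht i
    rw [hgx t ht i]
    simpa [pow_one] using this
  set G : ℝ → Fin N → ℝ := fun t i => ∫ s in (0:ℝ)..t, g s i with hG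
  have hG' : ∀ t i, HasDerivAt (fun s => G s i) (g t i) t := fun t i =>
    ((hgcont i).integral_hasStrictDerivAt 0 t).hasDerivAt
  -- positivity of x on [0,∞)
  have hpos : ∀ t, 0 ≤ t → ∀ i, 0 < x t i := by
    intro t ht i
    have hH : ∀ s, 0 ≤ s →
        HasDerivAt (fun r => x r i * Real.exp (G r i)) 0 s := by
      intro s hs
      have hd := (hx' s hs i).mul ((hG' s i).exp)
      have : -(g s i * x s i) * Real.exp (G s i)
          + x s i * (Real.exp (G s i) * g s i) = 0 := by ring
      rwa [this] at hd
    have hconst := constant_of_has_deriv_right_zero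
      (f := fun r => x r i * Real.exp (G r i)) (a := 0) (b := t)
      (fun s hs => (hH s hs.1).continuousAt.continuousWithinAt)
      (fun s hs => (hH s hs.1).hasDerivWithinAt)
      t ⟨ht, le_refl t⟩
    have hconst' : x t i * Real.exp (G t i) = x 0 i * Real.exp (G 0 i) := hconst
    have h1 : 0 < x t i * Real.exp (G t i) := by
      rw [hconst']
      exact mul_pos (hx0 i) (Real.exp_pos _)
    rcases mul_pos_iff.mp h1 with ⟨h, _⟩ | ⟨_, h⟩
    · exact h
    · exact absurd (Real.exp_pos (G t i)) (not_lt.mpr h.le)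
  -- the conserved quantity F
  set c : Fin N → ℝ := fun n => z n - xinf n with hc
  have hAc : A.mulVec c = 0 := by
    have hceq : c = z - xinf := rfl
    rw [hceq, Matrix.mulVec_sub, nnls_mulVec_eq A y hzmem hmem, sub_self]
  set F : ℝ → ℝ := fun t => ∑ n, c n * Real.log (x t n ^ 2) with hF
  have hFd : ∀ t, 0 ≤ t → HasDerivAt F 0 t := by
    intro t ht
    have hterm : ∀ n ∈ Finset.univ, HasDerivAt (fun s => c n * Real.log (x s n ^ 2))
        (c n * (-2 * g t n)) t := by
      intro n _
      have hxne : x t n ≠ 0 := (hpos t ht n).ne'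
      have hsq : HasDerivAt (fun s => x s n ^ 2)
          (↑2 * x t n ^ (2 - 1) * (-(g t n * x t n))) t := (hx' t ht n).pow 2
      have hlog := hsq.log (pow_ne_zero 2 hxne)
      have hval : (↑2 : ℝ) * x t n ^ (2 - 1) * (-(g t n * x t n)) / (x t n ^ 2)
          = -2 * g t n := by
        field_simp
        ring
      rw [hval] at hlog
      exact hlog.const_mul (c n)
    have hsum := HasDerivAt.fun_sum hterm
    have hzero : ∑ n, c n * (-2 * g t n) = 0 := by
      have h1 : ∑ n, c n * (-2 * g t n)
          = -2 * (c ⬝ᵥ (Aᵀ.mulVec (A.mulVec (fun j => xc t j ^ 2) - y))) := by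
        rw [dotProduct, Finset.mul_sum]
        exact Finset.sum_congr rfl fun n _ => by rw [hg]; ring
      rw [h1, Matrix.dotProduct_mulVec, Matrix.vecMul_transpose, hAc, zero_dotProduct,
        mul_zero]
    rwa [hzero] at hsum
  have hFconst : ∀ t, 0 ≤ t → F t = F 0 := by
    intro t ht
    exact constant_of_has_deriv_right_zero (f := F) (a := 0) (b := t)
      (fun s hs => (hFd s hs.1).continuousAt.continuousWithinAt)
      (fun s hs => (hFd s hs.1).hasDerivWithinAt)
      t ⟨ht, le_refl t⟩
  have hFtends0 : Tendsto F atTop (𝓝 (F 0)) := by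
    refine tendsto_const_nhds.congr' ?_
    filter_upwards [eventually_ge_atTop (0 : ℝ)] with t ht
    exact (hFconst t ht).symm
  have hlimc : ∀ n, Tendsto (fun t => x t n ^ 2) atTop (𝓝 (xinf n)) := fun n =>
    tendsto_pi_nhds.1 hlim n
  have hxinf0 : ∀ n, 0 ≤ xinf n := hmem.1
  by_cases hcase : ∀ n, xinf n = 0 → z n = 0
  · -- main case: supp z ⊆ supp xinf
    have hFlim : Tendsto F atTop (𝓝 (∑ n, c n * Real.log (xinf n))) := by
      apply tendsto_finset_sum
      intro n _
      by_cases h : xinf n = 0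
      · have hcz : c n = 0 := by rw [hc]; simp [h, hcase n h]
        simp only [hcz, zero_mul]
        exact tendsto_const_nhds
      · exact (((Real.continuousAt_log h).tendsto).comp (hlimc n)).const_mul _
    have hF0 : F 0 = ∑ n, c n * Real.log (xinf n) := tendsto_nhds_unique hFtends0 hFlim
    have hF0' : ∑ n, c n * Real.log (x 0 n ^ 2) = ∑ n, c n * Real.log (xinf n) := hF0
    -- pointwise Bregman inequality
    have hkey : ∀ n, 0 ≤ z n * Real.log (z n) - z n * Real.log (xinf n) - z n + xinf n := by
      intro n
      rcases eq_or_lt_of_le (hzmem.1 n) with h0 | hzpos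
      · simp [← h0, hxinf0 n]
      · have hxinfpos : 0 < xinf n := by
          rcases eq_or_lt_of_le (hxinf0 n) with h1 | h1
          · exact absurd (hcase n h1.symm) hzpos.ne'
          · exact h1
        have hlog : Real.log (xinf n / z n) ≤ xinf n / z n - 1 :=
          Real.log_le_sub_one_of_pos (by positivity)
        rw [Real.log_div (ne_of_gt hxinfpos) (ne_of_gt hzpos)] at hlog
        have := mul_le_mul_of_nonneg_left hlog hzpos.le
        have hzdiv : z n * (xinf n / z n - 1) = xinf n - z n := by
          field_simp
        rw [hzdiv] at this
        nlinarith
    -- conclude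
    rw [← sub_nonneg]
    have hdiff : (∑ n, z n * (Real.log (z n) - 1 - Real.log (x 0 n ^ 2)))
        - (∑ n, xinf n * (Real.log (xinf n) - 1 - Real.log (x 0 n ^ 2)))
        = ∑ n, (z n * Real.log (z n) - z n * Real.log (xinf n) - z n + xinf n) := by
      rw [← Finset.sum_sub_distrib]
      have step1 : ∀ n : Fin N,
          z n * (Real.log (z n) - 1 - Real.log (x 0 n ^ 2))
          - xinf n * (Real.log (xinf n) - 1 - Real.log (x 0 n ^ 2))
          = (z n * Real.log (z n) - z n - xinf n * Real.log (xinf n) + xinf n)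
            - c n * Real.log (x 0 n ^ 2) := by
        intro n; rw [hc]; ring
      rw [Finset.sum_congr rfl fun n _ => step1 n, Finset.sum_sub_distrib, hF0',
        ← Finset.sum_sub_distrib]
      refine Finset.sum_congr rfl fun n _ => ?_
      rw [hc]; ring
    rw [hdiff]
    exact Finset.sum_nonneg fun n _ => hkey n
  · -- impossible case: some z n > 0 with xinf n = 0
    exfalso
    push_neg at hcase
    obtain ⟨n, hxn, hzn⟩ := hcase
    have hznpos : 0 < z n := lt_of_le_of_ne (hzmem.1 n) (Ne.symm hzn)
    -- the n-th term tends to -∞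
    have htn : Tendsto (fun t => c n * Real.log (x t n ^ 2)) atTop atBot := by
      have hcn : c n = z n := by show z n - xinf n = z n; rw [hxn, sub_zero]
      have hxto : Tendsto (fun t => x t n ^ 2) atTop (𝓝[>] 0) := by
        rw [tendsto_nhdsWithin_iff]
        refine ⟨by rw [← hxn]; exact hlimc n, ?_⟩
        filter_upwards [eventually_ge_atTop (0 : ℝ)] with t ht
        exact pow_pos (hpos t ht n) 2
      have hlogto : Tendsto (fun t => Real.log (x t n ^ 2)) atTop atBot :=
        Real.tendsto_log_nhdsGT_zero.comp hxto
      rw [hcn]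
      exact hlogto.const_mul_atBot hznpos
    -- all other terms are eventually bounded above
    have hbound : ∀ m : Fin N, ∃ B : ℝ,
        ∀ᶠ t in atTop, c m * Real.log (x t m ^ 2) ≤ B := by
      intro m
      by_cases h : xinf m = 0
      · refine ⟨0, ?_⟩
        have hcm : 0 ≤ c m := by
          show 0 ≤ z m - xinf m; rw [h]; simpa using hzmem.1 m
        filter_upwards [(hlimc m).eventually (eventually_le_nhds (by rw [h]; norm_num :
            xinf m < 1)), eventually_ge_atTop (0 : ℝ)] with t hle ht
        exact mul_nonpos_of_nonneg_of_nonpos hcm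
          (Real.log_nonpos (by positivity) hle)
      · refine ⟨c m * Real.log (xinf m) + 1, ?_⟩
        have := (((Real.continuousAt_log h).tendsto).comp (hlimc m)).const_mul (c m)
        exact this.eventually (eventually_le_nhds (lt_add_one _))
    choose B hB using hbound
    have hrest : ∀ᶠ t in atTop, ∀ m ∈ Finset.univ.erase n,
        c m * Real.log (x t m ^ 2) ≤ B m := by
      rw [Filter.eventually_all_finset]
      intro m _
      exact hB m
    have hFle : ∀ᶠ t in atTop,
        F t ≤ c n * Real.log (x t n ^ 2) + ∑ m ∈ Finset.univ.erase n, B m := by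
      filter_upwards [hrest] with t hrt
      have hFt : F t = c n * Real.log (x t n ^ 2)
          + ∑ m ∈ Finset.univ.erase n, c m * Real.log (x t m ^ 2) :=
        (Finset.add_sum_erase _ _ (Finset.mem_univ n)).symm
      rw [hFt]
      exact add_le_add le_rfl (Finset.sum_le_sum hrt)
    have hFbot : Tendsto F atTop atBot :=
      tendsto_atBot_mono' _ hFle
        (tendsto_atBot_add_const_right _ _ htn)
    exact not_tendsto_atBot_of_tendsto_nhds hFtends0 hFbot
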